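/- Consider the time-invariant single-virus layered SIWS model under Assumptions A1, A2 and A3. Then ρ(D_f^{−1}B_f) > ρ(D^{−1}B); that is, the basic reproduction number ρ(D_f^{−1}B_f) of the layered networked SIWS model is strictly greater than the basic reproduction number ρ(D^{−1}B) of the networked SIS model with infection matrix B and healing matrix D = diag(δ_1,…,δ_n). -/

import Mathlib

open Matrix Filter

/-- Index type of the layered system: `n` population nodes plus `m` resource nodes. -/
abbrev SIdx (n m : ℕ) := Fin n ⊕ Fin m

/-- Spectral radius of a real square matrix (largest modulus of a complex eigenvalue). -/
noncomputable def specRad {ι : Type} [Fintype ι] [DecidableEq ι] (M : Matrix ι ι ℝ) : ℝ :=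
  sSup {r : ℝ | ∃ μ ∈ spectrum ℂ (M.map fun x => (x : ℂ)), r = ‖μ‖}

/-- Irreducibility of a matrix: every node can reach every other node in the associated graph. -/
def Irred {ι : Type} [Fintype ι] [DecidableEq ι] (M : Matrix ι ι ℝ) : Prop :=
  ∀ i j : ι, i ≠ j → ∃ k : ℕ, (M ^ k) i j ≠ 0

/-- The matrix `Z(z)`: diagonal of the population part of the state, zeros elsewhere. -/
noncomputable def Zm {n m : ℕ} (z : SIdx n m → ℝ) : Matrix (SIdx n m) (SIdx n m) ℝ :=
  Matrix.diagonal (Sum.elim (fun i => z (Sum.inl i)) fun _ => (0 : ℝ))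

/-- The layered infection matrix `B_f = [[B, B_w],[C_w, 0]]`. -/
noncomputable def BfM {n m : ℕ} (B : Matrix (Fin n) (Fin n) ℝ) (Bw : Matrix (Fin n) (Fin m) ℝ)
    (Cw : Matrix (Fin m) (Fin n) ℝ) : Matrix (SIdx n m) (SIdx n m) ℝ :=
  Matrix.fromBlocks B Bw Cw 0

/-- The layered healing matrix `D_f = diag(δ, δ^w)`. -/
noncomputable def DfM {n m : ℕ} (δ : Fin n → ℝ) (δw : Fin m → ℝ) :
    Matrix (SIdx n m) (SIdx n m) ℝ :=
  Matrix.diagonal (Sum.elim δ δw)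

/-- One step of the single-virus SIWS dynamics:
`z ↦ z − h (D_f − (I − Z(z)) B_f) z`. -/
noncomputable def step {n m : ℕ} (h : ℝ) (Dfm Bfm : Matrix (SIdx n m) (SIdx n m) ℝ)
    (z : SIdx n m → ℝ) : SIdx n m → ℝ :=
  z - h • ((Dfm - (1 - Zm z) * Bfm).mulVec z)

/-- The system domain `D = [0,1]^n × [0, w_max]^m`. -/
def inD {n m : ℕ} (wmax : ℝ) (z : SIdx n m → ℝ) : Prop :=
  (∀ i : Fin n, z (Sum.inl i) ∈ Set.Icc (0 : ℝ) 1) ∧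
    ∀ j : Fin m, z (Sum.inr j) ∈ Set.Icc (0 : ℝ) wmax

/-- Assumption A1 on the parameters of the single-virus SIWS model. -/
structure A1 {n m : ℕ} (h : ℝ) (δ : Fin n → ℝ) (δw : Fin m → ℝ)
    (B : Matrix (Fin n) (Fin n) ℝ) (Bw : Matrix (Fin n) (Fin m) ℝ)
    (Cw : Matrix (Fin m) (Fin n) ℝ) (wmax : ℝ) : Prop where
  h_pos : 0 < h
  delta_pos : ∀ i, 0 < δ i
  deltaw_pos : ∀ j, 0 < δw j
  B_nonneg : ∀ i j, 0 ≤ B i j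
  Bw_nonneg : ∀ i j, 0 ≤ Bw i j
  Cw_nonneg : ∀ j k, 0 ≤ Cw j k
  Cw_row_pos : ∀ j, ∃ k, 0 < Cw j k
  wmax_pos : 0 < wmax
  ratio_mem : ∀ j, (∑ k, Cw j k) / δw j ∈ Set.Icc (0 : ℝ) wmax
  h_delta : ∀ i, h * δ i ∈ Set.Ioc (0 : ℝ) 1
  h_deltaw : ∀ j, h * δw j ∈ Set.Ioc (0 : ℝ) 1
  h_beta : ∀ i, h * ((∑ j, B i j) + ∑ j, Bw i j * wmax) ∈ Set.Icc (0 : ℝ) 1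

/-- Assumption A3: `h(δ_i + Σ_j β_{ij} + Σ_j β^w_{ij} w_max) ∈ [0,1]` for all `i`. -/
def A3 {n m : ℕ} (h : ℝ) (δ : Fin n → ℝ) (B : Matrix (Fin n) (Fin n) ℝ)
    (Bw : Matrix (Fin n) (Fin m) ℝ) (wmax : ℝ) : Prop :=
  ∀ i, h * (δ i + (∑ j, B i j) + ∑ j, Bw i j * wmax) ∈ Set.Icc (0 : ℝ) 1

open Matrix Finset ENNReal NNReal Filter
set_option linter.unusedSectionVars false
noncomputable def cmap {ι : Type} [Fintype ι] [DecidableEq ι] (M : Matrix ι ι ℝ) :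
    Matrix ι ι ℂ := M.map fun x => (x : ℂ)

section SpecHelpers
variable {ι : Type} [Fintype ι] [DecidableEq ι]

attribute [local instance] Matrix.linftyOpNormedAddCommGroup Matrix.linftyOpNormedRing
  Matrix.linftyOpNormedAlgebra Matrix.linftyOpNormedSpace

noncomputable def specRad' (M : Matrix ι ι ℝ) : ℝ :=
  sSup {r : ℝ | ∃ μ ∈ spectrum ℂ (M.map fun x => (x : ℂ)), r = ‖μ‖}

lemma specSet_eq (M : Matrix ι ι ℝ) :
    {r : ℝ | ∃ μ ∈ spectrum ℂ (cmap M), r = ‖μ‖}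
      = (‖·‖) '' spectrum ℂ (cmap M) := by
  ext r; simp [Set.mem_image, eq_comm]

lemma specRad'_eq (M : Matrix ι ι ℝ) :
    specRad' M = sSup ((‖·‖) '' spectrum ℂ (cmap M)) := by
  rw [specRad', ← specSet_eq]; rfl

lemma isCompact_absSpec (M : Matrix ι ι ℝ) :
    IsCompact ((‖·‖) '' spectrum ℂ (cmap M)) :=
  (spectrum.isCompact (cmap M)).image continuous_norm

lemma abs_le_specRad' {M : Matrix ι ι ℝ} {μ : ℂ} (hμ : μ ∈ spectrum ℂ (cmap M)) :
    ‖μ‖ ≤ specRad' M := by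
  rw [specRad'_eq]
  exact le_csSup (isCompact_absSpec M).bddAbove ⟨μ, hμ, rfl⟩

lemma specRad'_mem [Nonempty ι] (M : Matrix ι ι ℝ) :
    ∃ μ ∈ spectrum ℂ (cmap M), ‖μ‖ = specRad' M := by
  have h1 : specRad' M ∈ (‖·‖) '' spectrum ℂ (cmap M) := by
    rw [specRad'_eq]
    exact (isCompact_absSpec M).sSup_mem ((spectrum.nonempty (cmap M)).image _)
  obtain ⟨μ, hμ, h⟩ := h1
  exact ⟨μ, hμ, h⟩

lemma specRad'_nonneg [Nonempty ι] (M : Matrix ι ι ℝ) : 0 ≤ specRad' M := by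
  obtain ⟨μ, _, h⟩ := specRad'_mem M
  exact h ▸ norm_nonneg μ

lemma spectralRadius_eq [Nonempty ι] (M : Matrix ι ι ℝ) :
    spectralRadius ℂ (cmap M) = ENNReal.ofReal (specRad' M) := by
  apply le_antisymm
  · rw [spectralRadius]
    refine iSup₂_le fun μ hμ => ?_
    rw [← enorm_eq_nnnorm, ← ofReal_norm]
    exact ENNReal.ofReal_le_ofReal (abs_le_specRad' hμ)
  · obtain ⟨μ, hμ, habs⟩ := specRad'_mem M
    calc ENNReal.ofReal (specRad' M) = ↑‖μ‖₊ := by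
          rw [← habs, ofReal_norm, enorm_eq_nnnorm]
      _ ≤ spectralRadius ℂ (cmap M) := le_iSup₂ (f := fun μ (_ : μ ∈ spectrum ℂ (cmap M)) =>
          (‖μ‖₊ : ℝ≥0∞)) μ hμ

lemma exists_eigenvector {M : Matrix ι ι ℝ} {μ : ℂ} (hμ : μ ∈ spectrum ℂ (cmap M)) :
    ∃ v : ι → ℂ, v ≠ 0 ∧ (cmap M).mulVec v = μ • v := by
  have h1 : ¬IsUnit (μ • (1 : Matrix ι ι ℂ) - cmap M) := by
    simpa [Algebra.algebraMap_eq_smul_one] using spectrum.mem_iff.mp hμ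
  have hdet : (μ • (1 : Matrix ι ι ℂ) - cmap M).det = 0 := by
    by_contra h
    exact h1 ((Matrix.isUnit_iff_isUnit_det _).mpr (Ne.isUnit h))
  obtain ⟨v, hv, hv0⟩ := (Matrix.exists_mulVec_eq_zero_iff).mpr hdet
  refine ⟨v, hv, ?_⟩
  have := hv0
  rw [Matrix.sub_mulVec, Matrix.smul_mulVec, Matrix.one_mulVec, sub_eq_zero] at this
  exact this.symm
end SpecHelpers
open Matrix Finset ENNReal NNReal Filter

section NonnegHelpers
variable {ι : Type} [Fintype ι] [DecidableEq ι]

lemma mulVec_apply' (M : Matrix ι ι ℝ) (x : ι → ℝ) (i : ι) :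
    M.mulVec x i = ∑ j, M i j * x j := rfl

lemma pow_nonneg' {M : Matrix ι ι ℝ} (hM : ∀ i j, 0 ≤ M i j) (k : ℕ) :
    ∀ i j, 0 ≤ (M ^ k) i j := by
  induction k with
  | zero =>
    intro i j
    rw [pow_zero]
    by_cases h : i = j <;> simp [Matrix.one_apply, h]
  | succ k ih =>
    intro i j
    rw [pow_succ, Matrix.mul_apply]
    exact sum_nonneg fun l _ => mul_nonneg (ih i l) (hM l j)

lemma pow_le_pow' {M N : Matrix ι ι ℝ} (hM : ∀ i j, 0 ≤ M i j)
    (hMN : ∀ i j, M i j ≤ N i j) (k : ℕ) : ∀ i j, (M ^ k) i j ≤ (N ^ k) i j := by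
  induction k with
  | zero => intro i j; rw [pow_zero, pow_zero]
  | succ k ih =>
    intro i j
    rw [pow_succ, pow_succ, Matrix.mul_apply, Matrix.mul_apply]
    refine sum_le_sum fun l _ => mul_le_mul (ih i l) (hMN l j) (hM l j)
      (le_trans (pow_nonneg' hM k i l) (ih i l))

lemma mulVec_mono {M : Matrix ι ι ℝ} (hM : ∀ i j, 0 ≤ M i j) {x y : ι → ℝ}
    (hxy : ∀ i, x i ≤ y i) : ∀ i, M.mulVec x i ≤ M.mulVec y i := fun i => by
  rw [mulVec_apply', mulVec_apply']
  exact sum_le_sum fun j _ => mul_le_mul_of_nonneg_left (hxy j) (hM i j)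

lemma iterate_ge {M : Matrix ι ι ℝ} (hM : ∀ i j, 0 ≤ M i j) {x : ι → ℝ}
    (hx : ∀ i, 0 ≤ x i) {c : ℝ} (hc : 0 ≤ c) (h : ∀ i, c * x i ≤ M.mulVec x i) (k : ℕ) :
    ∀ i, c ^ k * x i ≤ (M ^ k).mulVec x i := by
  induction k with
  | zero => intro i; simp [Matrix.one_mulVec]
  | succ k ih =>
    intro i
    have h1 : (M ^ (k + 1)).mulVec x = (M ^ k).mulVec (M.mulVec x) := by
      rw [Matrix.mulVec_mulVec, ← pow_succ]
    rw [h1]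
    calc c ^ (k + 1) * x i = c * (c ^ k * x i) := by ring
      _ ≤ c * (M ^ k).mulVec x i := by
          exact mul_le_mul_of_nonneg_left (ih i) hc
      _ = (M ^ k).mulVec (fun j => c * x j) i := by
          rw [mulVec_apply', mulVec_apply', Finset.mul_sum]
          exact Finset.sum_congr rfl fun j _ => by ring
      _ ≤ (M ^ k).mulVec (M.mulVec x) i :=
          mulVec_mono (pow_nonneg' hM k) (fun j => h j) i
end NonnegHelpers

section CW
variable {ι : Type} [Fintype ι] [DecidableEq ι]

attribute [local instance] Matrix.linftyOpNormedAddCommGroup Matrix.linftyOpNormedRing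
  Matrix.linftyOpNormedAlgebra Matrix.linftyOpNormedSpace

lemma rowsum_le_norm {N : Matrix ι ι ℝ} (hN : ∀ i j, 0 ≤ N i j) (i : ι) :
    ∑ j, N i j ≤ ‖cmap N‖ := by
  rw [Matrix.linfty_opNorm_def]
  have h1 : (∑ j, ‖(cmap N) i j‖₊ : ℝ≥0) ≤ (Finset.univ.sup fun i => ∑ j, ‖(cmap N) i j‖₊) :=
    Finset.le_sup (f := fun i => ∑ j, ‖(cmap N) i j‖₊) (Finset.mem_univ i)
  have h2 : ∑ j, N i j = ((∑ j, ‖(cmap N) i j‖₊ : ℝ≥0) : ℝ) := by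
    push_cast
    refine Finset.sum_congr rfl fun j _ => ?_
    simp [cmap, Complex.norm_real, abs_of_nonneg (hN i j)]
  rw [h2]
  exact_mod_cast h1

lemma cmap_pow (M : Matrix ι ι ℝ) (k : ℕ) : cmap (M ^ k) = (cmap M) ^ k := by
  have := (map_pow (Complex.ofRealHom.mapMatrix : Matrix ι ι ℝ →+* Matrix ι ι ℂ) M k)
  simp only [RingHom.mapMatrix_apply] at this
  exact this

lemma cw_lower [Nonempty ι] {M : Matrix ι ι ℝ} (hM : ∀ i j, 0 ≤ M i j) {x : ι → ℝ}
    (hx : ∀ i, 0 ≤ x i) (hx0 : x ≠ 0) {c : ℝ} (hc : 0 ≤ c)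
    (h : ∀ i, c * x i ≤ M.mulVec x i) : c ≤ specRad' M := by
  obtain ⟨i0, hi0⟩ : ∃ i, x i ≠ 0 := Function.ne_iff.mp hx0
  have hxi0 : 0 < x i0 := lt_of_le_of_ne (hx i0) (Ne.symm hi0)
  set C : ℝ := ∑ j, x j with hC
  have hCpos : 0 < C := by
    refine Finset.sum_pos' (fun j _ => hx j) ⟨i0, Finset.mem_univ i0, hxi0⟩
  set t : ℝ := x i0 / C with ht
  have htpos : 0 < t := div_pos hxi0 hCpos
  -- norm lower bound
  have key : ∀ k : ℕ, c ^ k * t ≤ ‖(cmap M) ^ k‖ := by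
    intro k
    have h1 : c ^ k * x i0 ≤ (M ^ k).mulVec x i0 := iterate_ge hM hx hc h k i0
    have h2 : (M ^ k).mulVec x i0 ≤ (∑ j, (M ^ k) i0 j) * C := by
      rw [mulVec_apply', Finset.sum_mul]
      refine Finset.sum_le_sum fun j _ => ?_
      refine mul_le_mul_of_nonneg_left ?_ (pow_nonneg' hM k i0 j)
      exact Finset.single_le_sum (fun l _ => hx l) (Finset.mem_univ j)
    have h3 : ∑ j, (M ^ k) i0 j ≤ ‖cmap (M ^ k)‖ := rowsum_le_norm (pow_nonneg' hM k) i0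
    rw [← cmap_pow]
    rw [ht, ← mul_div_assoc, div_le_iff₀ hCpos]
    calc c ^ k * x i0 ≤ (∑ j, (M ^ k) i0 j) * C := le_trans h1 h2
      _ ≤ ‖cmap (M ^ k)‖ * C := mul_le_mul_of_nonneg_right h3 hCpos.le
  -- limits
  have hT := spectrum.pow_norm_pow_one_div_tendsto_nhds_spectralRadius (cmap M)
  have hg : Tendsto (fun k : ℕ => c * t ^ (1 / (k : ℝ))) atTop (nhds c) := by
    have h0 : Tendsto (fun k : ℕ => t ^ (1 / (k : ℝ))) atTop (nhds 1) := by
      have h1 : Tendsto (fun k : ℕ => Real.log t * (1 / (k : ℝ))) atTop (nhds 0) := by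
        simpa using (tendsto_one_div_atTop_nhds_zero_nat).const_mul (Real.log t)
      have h2 : Tendsto (fun k : ℕ => Real.exp (Real.log t * (1 / (k : ℝ)))) atTop
          (nhds 1) := by
        simpa [Function.comp_def] using (Real.continuous_exp.tendsto 0).comp h1
      exact h2.congr fun k => (Real.rpow_def_of_pos htpos _).symm
    simpa using h0.const_mul c
  have hgo : Tendsto (fun k : ℕ => ENNReal.ofReal (c * t ^ (1 / (k : ℝ)))) atTop
      (nhds (ENNReal.ofReal c)) := (ENNReal.continuous_ofReal.tendsto c).comp hg
  have hle : ∀ᶠ k : ℕ in atTop, ENNReal.ofReal (c * t ^ (1 / (k : ℝ)))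
      ≤ ENNReal.ofReal (‖(cmap M) ^ k‖ ^ (1 / (k : ℝ))) := by
    filter_upwards [eventually_ge_atTop 1] with k hk
    apply ENNReal.ofReal_le_ofReal
    have hk0 : (k : ℝ) ≠ 0 := by positivity
    have e1 : c * t ^ (1 / (k : ℝ)) = (c ^ k * t) ^ (1 / (k : ℝ)) := by
      rw [Real.mul_rpow (pow_nonneg hc k) htpos.le]
      congr 1
      rw [← Real.rpow_natCast c k, ← Real.rpow_mul hc]
      rw [mul_one_div, div_self hk0, Real.rpow_one]
    rw [e1]
    exact Real.rpow_le_rpow (by positivity) (key k) (by positivity)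
  have := le_of_tendsto_of_tendsto hgo hT hle
  rw [spectralRadius_eq] at this
  exact (ENNReal.ofReal_le_ofReal_iff (specRad'_nonneg M)).mp this
end CW

section PF
variable {ι : Type} [Fintype ι] [DecidableEq ι]

lemma abs_super [Nonempty ι] {M : Matrix ι ι ℝ} (hM : ∀ i j, 0 ≤ M i j) :
    ∃ x : ι → ℝ, (∀ i, 0 ≤ x i) ∧ x ≠ 0 ∧ ∀ i, specRad' M * x i ≤ M.mulVec x i := by
  obtain ⟨μ, hμ, habs⟩ := specRad'_mem M
  obtain ⟨v, hv0, hv⟩ := exists_eigenvector hμ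
  refine ⟨fun i => ‖v i‖, fun i => norm_nonneg _, ?_, ?_⟩
  · obtain ⟨i, hi⟩ := Function.ne_iff.mp hv0
    intro hcon
    exact hi (norm_eq_zero.mp (congrFun hcon i))
  · intro i
    have h1 : ((cmap M).mulVec v) i = μ * v i := by rw [hv]; rfl
    have h2 : ‖((cmap M).mulVec v) i‖ = ‖μ‖ * ‖v i‖ := by
      rw [h1, norm_mul]
    rw [habs] at h2
    rw [← h2]
    calc ‖((cmap M).mulVec v) i‖
        = ‖∑ j, (M i j : ℂ) * v j‖ := rfl
      _ ≤ ∑ j, ‖(M i j : ℂ) * v j‖ := norm_sum_le _ _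
      _ = ∑ j, M i j * ‖v j‖ := by
          refine Finset.sum_congr rfl fun j _ => ?_
          rw [norm_mul, Complex.norm_real, Real.norm_eq_abs, abs_of_nonneg (hM i j)]
      _ = M.mulVec (fun j => ‖v j‖) i := (mulVec_apply' _ _ _).symm

lemma sum_pow_mulVec (M : Matrix ι ι ℝ) (K : ℕ) (x : ι → ℝ) (i : ι) :
    (∑ k ∈ Finset.range (K + 1), M ^ k).mulVec x i
      = ∑ k ∈ Finset.range (K + 1), (M ^ k).mulVec x i := by
  rw [mulVec_apply']
  simp only [Matrix.sum_apply, Finset.sum_mul]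
  rw [Finset.sum_comm]
  exact Finset.sum_congr rfl fun k _ => (mulVec_apply' _ _ _).symm

/-- Existence of the positive "connectivity" matrix `P = Σ_{k≤K} M^k`. -/
lemma exists_P {M : Matrix ι ι ℝ} (hM : ∀ i j, 0 ≤ M i j)
    (hirr : ∀ i j, i ≠ j → ∃ k : ℕ, (M ^ k) i j ≠ 0) :
    ∃ K : ℕ, ∀ i j, 0 < (∑ k ∈ Finset.range (K + 1), M ^ k) i j := by
  classical
  have hch : ∀ p : ι × ι, ∃ k : ℕ, (M ^ k) p.1 p.2 ≠ 0 := by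
    intro p
    by_cases h : p.1 = p.2
    · exact ⟨0, by rw [pow_zero]; simp [Matrix.one_apply, h]⟩
    · exact hirr p.1 p.2 h
  choose f hf using hch
  refine ⟨Finset.univ.sup f, fun i j => ?_⟩
  rw [Matrix.sum_apply]
  refine Finset.sum_pos' (fun k _ => pow_nonneg' hM k i j) ⟨f (i, j), ?_, ?_⟩
  · exact Finset.mem_range.mpr (Nat.lt_succ_of_le (Finset.le_sup (Finset.mem_univ (i, j))))
  · exact lt_of_le_of_ne (pow_nonneg' hM (f (i, j)) i j) (Ne.symm (hf (i, j)))

lemma P_mulVec_pos {P : Matrix ι ι ℝ} (hP : ∀ i j, 0 < P i j) {z : ι → ℝ}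
    (hz : ∀ i, 0 ≤ z i) (hz0 : z ≠ 0) : ∀ i, 0 < P.mulVec z i := by
  intro i
  obtain ⟨j0, hj0⟩ := Function.ne_iff.mp hz0
  rw [mulVec_apply']
  exact Finset.sum_pos' (fun j _ => mul_nonneg (hP i j).le (hz j))
    ⟨j0, Finset.mem_univ j0, mul_pos (hP i j0) (lt_of_le_of_ne (hz j0) (Ne.symm hj0))⟩

lemma perron [Nonempty ι] {M : Matrix ι ι ℝ} (hM : ∀ i j, 0 ≤ M i j)
    (hirr : ∀ i j, i ≠ j → ∃ k : ℕ, (M ^ k) i j ≠ 0) :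
    ∃ u : ι → ℝ, (∀ i, 0 < u i) ∧ M.mulVec u = specRad' M • u := by
  classical
  obtain ⟨K, hK⟩ := exists_P hM hirr
  set P := ∑ k ∈ Finset.range (K + 1), M ^ k with hPdef
  have hcomm : M * P = P * M := by
    rw [hPdef, Finset.mul_sum, Finset.sum_mul]
    exact Finset.sum_congr rfl fun k _ => (pow_mul_comm' M k).symm
  have hswap : ∀ y : ι → ℝ, M.mulVec (P.mulVec y) = P.mulVec (M.mulVec y) := by
    intro y
    rw [Matrix.mulVec_mulVec, Matrix.mulVec_mulVec, hcomm]
  obtain ⟨x, hx, hx0, hsup⟩ := abs_super hM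
  set ρ := specRad' M with hρ
  set d : ι → ℝ := M.mulVec x - ρ • x with hd
  have hdnn : ∀ i, 0 ≤ d i := fun i => by
    simpa [hd, sub_nonneg] using hsup i
  by_cases hdz : d = 0
  · -- exact eigenvector
    have hMx : M.mulVec x = ρ • x := by
      have := sub_eq_zero.mp hdz
      exact this
    refine ⟨P.mulVec x, P_mulVec_pos hK hx hx0, ?_⟩
    rw [hswap, hMx, Matrix.mulVec_smul]
  · exfalso
    set w := P.mulVec x with hw
    have hwpos : ∀ i, 0 < w i := P_mulVec_pos hK hx hx0
    have hMw : M.mulVec w = ρ • w + P.mulVec d := by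
      rw [hw, hswap]
      have : M.mulVec x = ρ • x + d := by rw [hd]; abel
      rw [this, Matrix.mulVec_add, Matrix.mulVec_smul]
    have hPd : ∀ i, 0 < P.mulVec d i := P_mulVec_pos hK hdnn hdz
    set ε := Finset.univ.inf' Finset.univ_nonempty (fun i => P.mulVec d i / w i) with hε
    have hεpos : 0 < ε :=
      (Finset.lt_inf'_iff _).mpr fun i _ => div_pos (hPd i) (hwpos i)
    have hbound : ∀ i, (ρ + ε) * w i ≤ M.mulVec w i := by
      intro i
      have h1 : ε ≤ P.mulVec d i / w i := Finset.inf'_le _ (Finset.mem_univ i)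
      have h2 : ε * w i ≤ P.mulVec d i := by
        rw [← div_mul_cancel₀ (P.mulVec d i) (hwpos i).ne']
        exact mul_le_mul_of_nonneg_right h1 (hwpos i).le
      have h3 : M.mulVec w i = ρ * w i + P.mulVec d i := by
        rw [hMw]; simp
      rw [h3]; nlinarith
    have hρε : ρ + ε ≤ ρ := by
      have h0 : (0:ℝ) ≤ ρ + ε := by
        have := specRad'_nonneg M
        linarith
      exact cw_lower hM (fun i => (hwpos i).le)
        (fun hcon => (hwpos (Classical.arbitrary ι)).ne' (congrFun hcon _)) h0 hbound
    linarith
end PF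

section Strict
variable {ι : Type} [Fintype ι] [DecidableEq ι]

lemma spectrum_transpose (N : Matrix ι ι ℂ) : spectrum ℂ Nᵀ = spectrum ℂ N := by
  ext μ
  rw [spectrum.mem_iff, spectrum.mem_iff]
  have h1 : algebraMap ℂ (Matrix ι ι ℂ) μ - Nᵀ = (algebraMap ℂ (Matrix ι ι ℂ) μ - N)ᵀ := by
    rw [Matrix.transpose_sub]
    congr 1
    rw [Matrix.algebraMap_eq_diagonal, Matrix.diagonal_transpose]
  rw [h1, not_iff_not, Matrix.isUnit_iff_isUnit_det, Matrix.isUnit_iff_isUnit_det,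
    Matrix.det_transpose]

lemma specRad'_transpose (M : Matrix ι ι ℝ) : specRad' Mᵀ = specRad' M := by
  rw [specRad'_eq, specRad'_eq]
  have h1 : cmap Mᵀ = (cmap M)ᵀ := rfl
  rw [h1, spectrum_transpose]

lemma pow_eig (M : Matrix ι ι ℝ) {x : ι → ℝ} {ρ : ℝ} (h : M.mulVec x = ρ • x) (k : ℕ) :
    (M ^ k).mulVec x = ρ ^ k • x := by
  induction k with
  | zero => simp [Matrix.one_mulVec]
  | succ k ih =>
    rw [pow_succ', ← Matrix.mulVec_mulVec, ih, Matrix.mulVec_smul, h, smul_smul, pow_succ']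
    rw [mul_comm]

lemma strict_mono_specRad [Nonempty ι] {A C : Matrix ι ι ℝ} (hA : ∀ i j, 0 ≤ A i j)
    (hC : ∀ i j, 0 ≤ C i j) (hCA : ∀ i j, C i j ≤ A i j)
    (hirr : ∀ i j, i ≠ j → ∃ k : ℕ, (A ^ k) i j ≠ 0) {p q : ι} (hpq : C p q < A p q) :
    specRad' C < specRad' A := by
  classical
  -- Perron vector for Aᵀ
  have hAT : ∀ i j, 0 ≤ Aᵀ i j := fun i j => hA j i
  have hirrT : ∀ i j, i ≠ j → ∃ k : ℕ, (Aᵀ ^ k) i j ≠ 0 := by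
    intro i j hij
    obtain ⟨k, hk⟩ := hirr j i (Ne.symm hij)
    refine ⟨k, ?_⟩
    rw [← Matrix.transpose_pow]
    exact hk
  obtain ⟨u, hu, huvec⟩ := perron hAT hirrT
  rw [specRad'_transpose] at huvec
  set ρ := specRad' A with hρ
  set σ := specRad' C with hσ
  obtain ⟨x, hx, hx0, hsup⟩ := abs_super hC
  rw [← hσ] at hsup
  obtain ⟨i0, hi0⟩ := Function.ne_iff.mp hx0
  have hxi0 : 0 < x i0 := lt_of_le_of_ne (hx i0) (Ne.symm hi0)
  set s := ∑ i, u i * x i with hs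
  have hspos : 0 < s :=
    Finset.sum_pos' (fun i _ => mul_nonneg (hu i).le (hx i))
      ⟨i0, Finset.mem_univ i0, mul_pos (hu i0) hxi0⟩
  -- the two nonnegative sums
  have hsum_eq : ∑ i, u i * (A.mulVec x i) = ρ * s := by
    have e1 : ∑ i, u i * (A.mulVec x i) = ∑ j, Aᵀ.mulVec u j * x j := by
      simp only [mulVec_apply', Matrix.transpose_apply, Finset.sum_mul, Finset.mul_sum]
      rw [Finset.sum_comm]
      exact Finset.sum_congr rfl fun j _ => Finset.sum_congr rfl fun i _ => by ring
    rw [e1, huvec]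
    simp only [Pi.smul_apply, smul_eq_mul, hs, Finset.mul_sum]
    exact Finset.sum_congr rfl fun j _ => by ring
  have h1 : ∀ i, 0 ≤ u i * (C.mulVec x i - σ * x i) := fun i =>
    mul_nonneg (hu i).le (by have := hsup i; linarith)
  have h2 : ∀ i, 0 ≤ u i * (A.mulVec x i - C.mulVec x i) := fun i => by
    refine mul_nonneg (hu i).le ?_
    have := mulVec_mono hC (le_refl x)  -- dummy
    have hCAx : C.mulVec x i ≤ A.mulVec x i := by
      rw [mulVec_apply', mulVec_apply']
      exact Finset.sum_le_sum fun j _ => mul_le_mul_of_nonneg_right (hCA i j) (hx j)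
    linarith
  have htotal : ∑ i, u i * (C.mulVec x i - σ * x i) + ∑ i, u i * (A.mulVec x i - C.mulVec x i)
      = ρ * s - σ * s := by
    rw [← Finset.sum_add_distrib]
    have : ∀ i, u i * (C.mulVec x i - σ * x i) + u i * (A.mulVec x i - C.mulVec x i)
        = u i * (A.mulVec x i) - σ * (u i * x i) := fun i => by ring
    rw [Finset.sum_congr rfl fun i _ => this i, Finset.sum_sub_distrib, hsum_eq,
      ← Finset.mul_sum, ← hs]
  have hσρ : σ ≤ ρ := by
    have hsum1 : 0 ≤ ∑ i, u i * (C.mulVec x i - σ * x i) :=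
      Finset.sum_nonneg fun i _ => h1 i
    have hsum2 : 0 ≤ ∑ i, u i * (A.mulVec x i - C.mulVec x i) :=
      Finset.sum_nonneg fun i _ => h2 i
    nlinarith
  rcases lt_or_eq_of_le hσρ with h | h
  · exact h
  · exfalso
    -- σ = ρ : both sums vanish
    have hz : ∑ i, u i * (C.mulVec x i - σ * x i) = 0 ∧
        ∑ i, u i * (A.mulVec x i - C.mulVec x i) = 0 := by
      have hsum1 : 0 ≤ ∑ i, u i * (C.mulVec x i - σ * x i) :=
        Finset.sum_nonneg fun i _ => h1 i
      have hsum2 : 0 ≤ ∑ i, u i * (A.mulVec x i - C.mulVec x i) :=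
        Finset.sum_nonneg fun i _ => h2 i
      constructor <;> nlinarith [htotal, h ▸ htotal]
    have hterm1 : ∀ i, u i * (C.mulVec x i - σ * x i) = 0 := fun i =>
      (Finset.sum_eq_zero_iff_of_nonneg (fun i _ => h1 i)).mp hz.1 i (Finset.mem_univ i)
    have hterm2 : ∀ i, u i * (A.mulVec x i - C.mulVec x i) = 0 := fun i =>
      (Finset.sum_eq_zero_iff_of_nonneg (fun i _ => h2 i)).mp hz.2 i (Finset.mem_univ i)
    have hCx : ∀ i, C.mulVec x i = σ * x i := fun i => by
      have := hterm1 i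
      rcases mul_eq_zero.mp this with h' | h'
      · exact absurd h' (hu i).ne'
      · linarith
    have hAx : ∀ i, A.mulVec x i = C.mulVec x i := fun i => by
      have := hterm2 i
      rcases mul_eq_zero.mp this with h' | h'
      · exact absurd h' (hu i).ne'
      · linarith
    -- A x = ρ x, hence x > 0 everywhere
    have hAxe : A.mulVec x = ρ • x := by
      funext i
      rw [hAx i, hCx i, h]
      rfl
    obtain ⟨K, hK⟩ := exists_P hA hirr
    have hPx : ∀ i, 0 < (∑ k ∈ Finset.range (K + 1), A ^ k).mulVec x i :=
      P_mulVec_pos hK hx hx0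
    have hxpos : ∀ i, 0 < x i := by
      intro i
      have h3 : (∑ k ∈ Finset.range (K + 1), A ^ k).mulVec x i
          = (∑ k ∈ Finset.range (K + 1), ρ ^ k) * x i := by
        rw [sum_pow_mulVec, Finset.sum_mul]
        refine Finset.sum_congr rfl fun k _ => ?_
        rw [pow_eig A hAxe k]
        rfl
      have h4 : 0 < (∑ k ∈ Finset.range (K + 1), ρ ^ k) * x i := h3 ▸ hPx i
      have h5 : 0 ≤ ∑ k ∈ Finset.range (K + 1), ρ ^ k :=
        Finset.sum_nonneg fun k _ => pow_nonneg (hρ ▸ specRad'_nonneg A) k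
      nlinarith [hx i]
    -- contradiction at the strict entry
    have h6 : ∑ j, C p j * x j < ∑ j, A p j * x j := by
      refine Finset.sum_lt_sum (fun j _ => mul_le_mul_of_nonneg_right (hCA p j) (hx j))
        ⟨q, Finset.mem_univ q, ?_⟩
      exact mul_lt_mul_of_pos_right hpq (hxpos q)
    have h7 := hAx p
    rw [mulVec_apply', mulVec_apply'] at h7
    linarith
end Strict

section Pad
lemma specRad'_pad_le {n m : ℕ} [Nonempty (Fin n)] (T : Matrix (Fin n) (Fin n) ℝ) :
    specRad' T ≤ specRad' (Matrix.fromBlocks T 0 0 (0 : Matrix (Fin m) (Fin m) ℝ)) := by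
  obtain ⟨μ, hμ, habs⟩ := specRad'_mem T
  rw [← habs]
  refine abs_le_specRad' ?_
  rw [spectrum.mem_iff] at hμ ⊢
  intro hcon
  apply hμ
  have hmap : cmap (Matrix.fromBlocks T 0 0 (0 : Matrix (Fin m) (Fin m) ℝ))
      = Matrix.fromBlocks (cmap T) 0 0 (0 : Matrix (Fin m) (Fin m) ℂ) := by
    rw [cmap, Matrix.fromBlocks_map]
    congr 1 <;> ext i j <;> simp [Matrix.map_apply]
  have hblock : algebraMap ℂ (Matrix (Fin n ⊕ Fin m) (Fin n ⊕ Fin m) ℂ) μ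
      - cmap (Matrix.fromBlocks T 0 0 (0 : Matrix (Fin m) (Fin m) ℝ))
      = Matrix.fromBlocks (algebraMap ℂ (Matrix (Fin n) (Fin n) ℂ) μ - cmap T) 0 0
          (μ • (1 : Matrix (Fin m) (Fin m) ℂ)) := by
    rw [hmap, Algebra.algebraMap_eq_smul_one, Algebra.algebraMap_eq_smul_one,
      ← Matrix.fromBlocks_one, Matrix.fromBlocks_smul]
    ext (i | i) (j | j) <;>
      simp [Matrix.fromBlocks_apply₁₁, Matrix.fromBlocks_apply₁₂,
        Matrix.fromBlocks_apply₂₁, Matrix.fromBlocks_apply₂₂, Matrix.sub_apply]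
  rw [Matrix.isUnit_iff_isUnit_det, hblock, Matrix.det_fromBlocks_zero₂₁] at hcon
  exact (Matrix.isUnit_iff_isUnit_det _).mpr (isUnit_of_mul_isUnit_left hcon)
end Pad


lemma specRad_eq_specRad' {ι : Type} [Fintype ι] [DecidableEq ι] (M : Matrix ι ι ℝ) :
    specRad M = specRad' M := rfl

/-- the basic reproduction number of the layered SIWS model is strictly
greater than that of the networked SIS model. -/
theorem stmt6 {n m : ℕ} (hm : 0 < m) (h wmax : ℝ) (δ : Fin n → ℝ) (δw : Fin m → ℝ)
    (B : Matrix (Fin n) (Fin n) ℝ) (Bw : Matrix (Fin n) (Fin m) ℝ)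
    (Cw : Matrix (Fin m) (Fin n) ℝ)
    (hA1 : A1 h δ δw B Bw Cw wmax)
    (hA2 : Irred (BfM B Bw Cw))
    (hA3 : A3 h δ B Bw wmax) :
    specRad ((Matrix.diagonal δ)⁻¹ * B) < specRad ((DfM δ δw)⁻¹ * BfM B Bw Cw) := by
  classical
  obtain ⟨k0, hk0⟩ := hA1.Cw_row_pos ⟨0, hm⟩
  have hn : Nonempty (Fin n) := ⟨k0⟩
  have hmm : Nonempty (Fin m) := ⟨⟨0, hm⟩⟩
  have hSn : Nonempty (SIdx n m) := ⟨Sum.inl k0⟩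
  set δf : SIdx n m → ℝ := Sum.elim δ δw with hδf
  have hδfpos : ∀ i, 0 < δf i := by
    rintro (i | i)
    exacts [hA1.delta_pos i, hA1.deltaw_pos i]
  have hDfinv : (DfM δ δw)⁻¹ = Matrix.diagonal fun i => (δf i)⁻¹ := by
    apply Matrix.inv_eq_right_inv
    rw [DfM, ← hδf, Matrix.diagonal_mul_diagonal]
    rw [show (fun i => δf i * (δf i)⁻¹) = fun _ => (1 : ℝ) from
      funext fun i => mul_inv_cancel₀ (hδfpos i).ne', Matrix.diagonal_one]
  have hDinv : (Matrix.diagonal δ)⁻¹ = Matrix.diagonal fun i => (δ i)⁻¹ := by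
    apply Matrix.inv_eq_right_inv
    rw [Matrix.diagonal_mul_diagonal]
    rw [show (fun i => δ i * (δ i)⁻¹) = fun _ => (1 : ℝ) from
      funext fun i => mul_inv_cancel₀ (hA1.delta_pos i).ne', Matrix.diagonal_one]
  set Bf := BfM B Bw Cw with hBf
  set A := Matrix.diagonal (fun i => (δf i)⁻¹) * Bf with hA
  set T := Matrix.diagonal (fun i : Fin n => (δ i)⁻¹) * B with hT
  set C := Matrix.fromBlocks T 0 0 (0 : Matrix (Fin m) (Fin m) ℝ) with hC
  have hAapp : ∀ i j, A i j = (δf i)⁻¹ * Bf i j := fun i j => by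
    rw [hA, Matrix.diagonal_mul]
  have hTapp : ∀ i j, T i j = (δ i)⁻¹ * B i j := fun i j => by
    rw [hT, Matrix.diagonal_mul]
  have hBfnn : ∀ i j, 0 ≤ Bf i j := by
    rintro (i | i) (j | j)
    · exact hA1.B_nonneg i j
    · exact hA1.Bw_nonneg i j
    · exact hA1.Cw_nonneg i j
    · exact le_refl 0
  have hAnn : ∀ i j, 0 ≤ A i j := fun i j => by
    rw [hAapp]
    exact mul_nonneg (inv_nonneg.mpr (hδfpos i).le) (hBfnn i j)
  have hCnn : ∀ i j, 0 ≤ C i j := by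
    rintro (i | i) (j | j)
    · rw [hC, Matrix.fromBlocks_apply₁₁, hTapp]
      exact mul_nonneg (inv_nonneg.mpr (hA1.delta_pos i).le) (hA1.B_nonneg i j)
    · exact le_refl 0
    · exact le_refl 0
    · exact le_refl 0
  have hCA : ∀ i j, C i j ≤ A i j := by
    rintro (i | i) (j | j)
    · rw [hC, Matrix.fromBlocks_apply₁₁, hTapp, hAapp]
      exact le_refl _
    · exact hAnn _ _
    · exact hAnn _ _
    · exact hAnn _ _
  have hstrict : C (Sum.inr ⟨0, hm⟩) (Sum.inl k0) < A (Sum.inr ⟨0, hm⟩) (Sum.inl k0) := by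
    have h1 : C (Sum.inr ⟨0, hm⟩) (Sum.inl k0) = 0 := rfl
    rw [h1, hAapp]
    have h2 : Bf (Sum.inr ⟨0, hm⟩) (Sum.inl k0) = Cw ⟨0, hm⟩ k0 := rfl
    rw [h2]
    exact mul_pos (inv_pos.mpr (hδfpos (Sum.inr ⟨0, hm⟩))) hk0
  -- irreducibility of A
  have hirrA : ∀ i j, i ≠ j → ∃ k : ℕ, (A ^ k) i j ≠ 0 := by
    intro i j hij
    obtain ⟨k, hk⟩ := hA2 i j hij
    set c : ℝ := Finset.univ.inf' Finset.univ_nonempty (fun i => (δf i)⁻¹) with hc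
    have hcpos : 0 < c :=
      (Finset.lt_inf'_iff _).mpr fun i _ => inv_pos.mpr (hδfpos i)
    have hcle : ∀ i, c ≤ (δf i)⁻¹ := fun i => Finset.inf'_le _ (Finset.mem_univ i)
    have hMnn : ∀ i' j', 0 ≤ (c • Bf) i' j' := fun i' j' =>
      mul_nonneg hcpos.le (hBfnn i' j')
    have hMA : ∀ i' j', (c • Bf) i' j' ≤ A i' j' := fun i' j' => by
      rw [hAapp]
      exact mul_le_mul_of_nonneg_right (hcle i') (hBfnn i' j')
    refine ⟨k, ?_⟩
    have h1 : ((c • Bf) ^ k) i j ≤ (A ^ k) i j := pow_le_pow' hMnn hMA k i j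
    have h2 : ((c • Bf) ^ k) i j = c ^ k * (Bf ^ k) i j := by
      rw [smul_pow]
      rfl
    have h3 : 0 < (Bf ^ k) i j :=
      lt_of_le_of_ne (pow_nonneg' hBfnn k i j) (Ne.symm hk)
    have h4 : 0 < c ^ k * (Bf ^ k) i j := mul_pos (pow_pos hcpos k) h3
    have : 0 < (A ^ k) i j := lt_of_lt_of_le (h2 ▸ h4) h1
    exact this.ne'
  have hmain : specRad' C < specRad' A :=
    strict_mono_specRad hAnn hCnn hCA hirrA hstrict
  have hpad : specRad' T ≤ specRad' C := specRad'_pad_le T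
  rw [hDinv, hDfinv, specRad_eq_specRad', specRad_eq_specRad', ← hT, ← hA]
  exact lt_of_le_of_lt hpad hmain
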